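/- Let G* = Σ_{j=1}^L exp(b*ⱼ) δ_{Z*ⱼ} be a discrete measure with distinct atoms Z*ⱼ in a metric space and positive weights, and let G = Σ_{i=1}^{L'} exp(bᵢ) δ_{Zᵢ} with L' ≥ L. Define D(G,G*) = Σⱼ |Σ_{i∈𝒱ⱼ} exp(bᵢ) - exp(b*ⱼ)| + Σⱼ Σ_{i∈𝒱ⱼ} exp(bᵢ)·dist(Zᵢ, Z*ⱼ), where 𝒱ⱼ are the Voronoi cells of the atoms of G generated by the Z*ⱼ. Then D(G, G*) = 0 if and only if the measures G and G* are equal (i.e., the multisets of weighted atoms coincide). -/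
import Mathlib


open MeasureTheory

/-- The Voronoi loss separates mixing measures: `D(G, G*) = 0` iff the discrete measures
`G = Σᵢ exp(bᵢ) δ_{Zᵢ}` and `G* = Σⱼ exp(b*ⱼ) δ_{Z*ⱼ}` coincide. The assignment `φ`
sends each atom index `i` to the (unique chosen) Voronoi cell containing it, so that the
cells `{i : φ i = j}` partition the index set. -/
theorem voronoi_loss_eq_zero_iff {M : Type*} [MetricSpace M] [MeasurableSpace M]
    [BorelSpace M] (L L' : ℕ) (hLL' : L ≤ L')
    (Zs : Fin L → M) (hZs : Function.Injective Zs) (bs : Fin L → ℝ)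
    (Z : Fin L' → M) (b : Fin L' → ℝ)
    (φ : Fin L' → Fin L)
    (hφ : ∀ i ℓ, dist (Z i) (Zs (φ i)) ≤ dist (Z i) (Zs ℓ))
    (D : ℝ)
    (hD : D = (∑ j, |(∑ i ∈ Finset.univ.filter (fun i => φ i = j), Real.exp (b i))
                  - Real.exp (bs j)|)
            + ∑ j, ∑ i ∈ Finset.univ.filter (fun i => φ i = j),
                Real.exp (b i) * dist (Z i) (Zs j)) :
    D = 0 ↔
      (∑ i, (ENNReal.ofReal (Real.exp (b i))) • Measure.dirac (Z i))
        = ∑ j, (ENNReal.ofReal (Real.exp (bs j))) • Measure.dirac (Zs j) := by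
  constructor
  · intro h0
    rw [h0] at hD
    have hAnn : (0:ℝ) ≤ ∑ j, |(∑ i ∈ Finset.univ.filter (fun i => φ i = j), Real.exp (b i))
        - Real.exp (bs j)| := Finset.sum_nonneg fun j _ => abs_nonneg _
    have hBnn : (0:ℝ) ≤ ∑ j, ∑ i ∈ Finset.univ.filter (fun i => φ i = j),
        Real.exp (b i) * dist (Z i) (Zs j) :=
      Finset.sum_nonneg fun j _ => Finset.sum_nonneg fun i _ =>
        mul_nonneg (Real.exp_pos _).le dist_nonneg
    have hA0 : (∑ j, |(∑ i ∈ Finset.univ.filter (fun i => φ i = j), Real.exp (b i))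
        - Real.exp (bs j)|) = 0 := by linarith
    have hB0 : (∑ j, ∑ i ∈ Finset.univ.filter (fun i => φ i = j),
        Real.exp (b i) * dist (Z i) (Zs j)) = 0 := by linarith
    have hA : ∀ j, (∑ i ∈ Finset.univ.filter (fun i => φ i = j), Real.exp (b i))
        = Real.exp (bs j) := by
      intro j
      have h1 := (Finset.sum_eq_zero_iff_of_nonneg (fun j _ => abs_nonneg _)).1 hA0 j
        (Finset.mem_univ j)
      have h2 := abs_eq_zero.1 h1
      linarith
    have hZ : ∀ i, Z i = Zs (φ i) := by
      intro i
      have h1 := (Finset.sum_eq_zero_iff_of_nonneg (fun j _ => Finset.sum_nonneg fun i _ =>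
        mul_nonneg (Real.exp_pos _).le dist_nonneg)).1 hB0 (φ i) (Finset.mem_univ _)
      have h2 := (Finset.sum_eq_zero_iff_of_nonneg (fun i _ =>
        mul_nonneg (Real.exp_pos _).le dist_nonneg)).1 h1 i (by simp)
      have h3 : dist (Z i) (Zs (φ i)) = 0 := by
        rcases mul_eq_zero.1 h2 with h | h
        · exact absurd h (Real.exp_pos _).ne'
        · exact h
      exact dist_eq_zero.1 h3
    calc (∑ i, (ENNReal.ofReal (Real.exp (b i))) • Measure.dirac (Z i))
        = ∑ j, ∑ i ∈ Finset.univ.filter (fun i => φ i = j),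
            (ENNReal.ofReal (Real.exp (b i))) • Measure.dirac (Z i) :=
          (Finset.sum_fiberwise Finset.univ φ _).symm
      _ = ∑ j, (ENNReal.ofReal (Real.exp (bs j))) • Measure.dirac (Zs j) := by
          refine Finset.sum_congr rfl fun j _ => ?_
          have hcg : ∀ i ∈ Finset.univ.filter (fun i => φ i = j),
              (ENNReal.ofReal (Real.exp (b i))) • Measure.dirac (Z i)
                = (ENNReal.ofReal (Real.exp (b i))) • Measure.dirac (Zs j) := by
            intro i hi
            obtain ⟨-, hij⟩ := Finset.mem_filter.1 hi
            rw [hZ i, hij]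
          rw [Finset.sum_congr rfl hcg, ← Finset.sum_smul,
            ← ENNReal.ofReal_sum_of_nonneg (fun i _ => (Real.exp_pos _).le), hA j]
  · intro hmeas
    classical
    have happ : ∀ x : M,
        (∑ i, ENNReal.ofReal (Real.exp (b i)) * (if Z i = x then (1:ENNReal) else 0))
          = ∑ j, ENNReal.ofReal (Real.exp (bs j)) * (if Zs j = x then (1:ENNReal) else 0) := by
      intro x
      have h := congrArg (fun μ : Measure M => μ {x}) hmeas
      simpa [Measure.finset_sum_apply, Measure.smul_apply, smul_eq_mul,
        Measure.dirac_apply' _ (measurableSet_singleton x), Set.indicator_apply] using h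
    have hmem : ∀ i, ∃ ℓ, Z i = Zs ℓ := by
      intro i
      by_contra h
      push_neg at h
      have hx := happ (Z i)
      have hR0 : (∑ j, ENNReal.ofReal (Real.exp (bs j)) * (if Zs j = Z i then (1:ENNReal) else 0)) = 0 :=
        Finset.sum_eq_zero fun j _ => by rw [if_neg (Ne.symm (h j)), mul_zero]
      rw [hR0] at hx
      have h2 := (Finset.sum_eq_zero_iff.1 hx) i (Finset.mem_univ i)
      rw [if_pos rfl, mul_one, ENNReal.ofReal_eq_zero] at h2
      exact absurd h2 (Real.exp_pos (b i)).not_ge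
    have hZ : ∀ i, Z i = Zs (φ i) := by
      intro i
      obtain ⟨ℓ, hℓ⟩ := hmem i
      have h1 : dist (Z i) (Zs (φ i)) ≤ 0 :=
        calc dist (Z i) (Zs (φ i)) ≤ dist (Z i) (Zs ℓ) := hφ i ℓ
          _ = 0 := by rw [hℓ, dist_self]
      exact dist_eq_zero.1 (le_antisymm h1 dist_nonneg)
    have hA : ∀ j, (∑ i ∈ Finset.univ.filter (fun i => φ i = j), Real.exp (b i))
        = Real.exp (bs j) := by
      intro j
      have hx := happ (Zs j)
      have hL : (∑ i, ENNReal.ofReal (Real.exp (b i)) * (if Z i = Zs j then (1:ENNReal) else 0))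
          = ∑ i ∈ Finset.univ.filter (fun i => φ i = j), ENNReal.ofReal (Real.exp (b i)) := by
        rw [Finset.sum_filter]
        refine Finset.sum_congr rfl fun i _ => ?_
        have hiff : Z i = Zs j ↔ φ i = j := by
          rw [hZ i]; exact ⟨fun h => hZs h, fun h => by rw [h]⟩
        by_cases hc : φ i = j
        · simp [hc, hiff.2 hc]
        · have hne : Z i ≠ Zs j := fun h => hc (hiff.1 h)
          simp [hc, hne]
      have hR : (∑ j', ENNReal.ofReal (Real.exp (bs j')) * (if Zs j' = Zs j then (1:ENNReal) else 0))
          = ENNReal.ofReal (Real.exp (bs j)) := by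
        rw [Finset.sum_eq_single j]
        · simp
        · intro j' _ hj'
          have hne : Zs j' ≠ Zs j := fun h => hj' (hZs h)
          simp [hne]
        · simp
      rw [hL, hR, ← ENNReal.ofReal_sum_of_nonneg (fun i _ => (Real.exp_pos _).le)] at hx
      exact (ENNReal.ofReal_eq_ofReal_iff
        (Finset.sum_nonneg fun i _ => (Real.exp_pos _).le) (Real.exp_pos _).le).1 hx
    rw [hD]
    have hB : (∑ j, ∑ i ∈ Finset.univ.filter (fun i => φ i = j),
        Real.exp (b i) * dist (Z i) (Zs j)) = 0 := by
      refine Finset.sum_eq_zero fun j _ => Finset.sum_eq_zero fun i hi => ?_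
      obtain ⟨-, hij⟩ := Finset.mem_filter.1 hi
      rw [hZ i, hij, dist_self, mul_zero]
    rw [hB]
    simp [hA]
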